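/- Uniqueness of union decompositions up to isomorphism: let (𝔊¹ᵢ)_{0 ≤ i ≤ n₁} and (𝔊²ⱼ)_{0 ≤ j ≤ n₂} be union decompositions. If 𝔊¹₀ ∪ ⋯ ∪ 𝔊¹_{n₁} ≃ 𝔊²₀ ∪ ⋯ ∪ 𝔊²_{n₂}, then n₁ = n₂ and there exists a bijection g of {0, …, n₁} such that 𝔊¹ᵢ ≃ 𝔊²_{g(i)} for every 0 ≤ i ≤ n₁. -/

import Mathlib

set_option autoImplicit false
set_option linter.unusedVariables false

namespace LawOrder

/-! ## Graph representations -/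

structure Graph (B : Type) where
  n : ℕ
  label : ℕ → B
  edge : ℕ → ℕ → Prop
  edge_lt : ∀ i j, edge i j → i < n ∧ j < n

namespace Graph

variable {B : Type}

/-- The edge relation is acyclic. -/
def Acyclic (G : Graph B) : Prop := ∀ i, ¬ Relation.TransGen G.edge i i

/-- The empty graph representation. -/
def zero (B : Type) [Inhabited B] : Graph B :=
  ⟨0, fun _ => default, fun _ _ => False, fun _ _ h => h.elim⟩

/-- Union of two graph representations: disjoint union, second part shifted. -/
def union (G₁ G₂ : Graph B) : Graph B where
  n := G₁.n + G₂.n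
  label := fun i => if i < G₁.n then G₁.label i else G₂.label (i - G₁.n)
  edge := fun i j =>
    G₁.edge i j ∨ (G₁.n ≤ i ∧ G₁.n ≤ j ∧ G₂.edge (i - G₁.n) (j - G₁.n))
  edge_lt := by
    intro i j h
    rcases h with h | ⟨hi, hj, h⟩
    · have := G₁.edge_lt i j h; omega
    · have := G₂.edge_lt _ _ h; omega

/-- Join of two graph representations: union plus all edges from the first
    part to the second part. -/
def join (G₁ G₂ : Graph B) : Graph B where
  n := G₁.n + G₂.n
  label := fun i => if i < G₁.n then G₁.label i else G₂.label (i - G₁.n)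
  edge := fun i j =>
    G₁.edge i j ∨ (G₁.n ≤ i ∧ G₁.n ≤ j ∧ G₂.edge (i - G₁.n) (j - G₁.n)) ∨
      (i < G₁.n ∧ G₁.n ≤ j ∧ j < G₁.n + G₂.n)
  edge_lt := by
    intro i j h
    rcases h with h | ⟨hi, hj, h⟩ | ⟨hi, hj₁, hj₂⟩
    · have := G₁.edge_lt i j h; omega
    · have := G₂.edge_lt _ _ h; omega
    · omega

/-- Isomorphism of graph representations. -/
def Iso (G₁ G₂ : Graph B) : Prop :=
  G₁.n = G₂.n ∧ ∃ f : Fin G₁.n → Fin G₁.n, Function.Bijective f ∧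
    (∀ i j : Fin G₁.n, G₁.edge (f i).val (f j).val ↔ G₂.edge i.val j.val) ∧
    (∀ i : Fin G₁.n, G₁.label (f i).val = G₂.label i.val)

/-- `G₁` is a spanning graph representation of `G₂`: same vertices and labels,
    and the edges of `G₁` are contained in those of `G₂`. -/
def Spanning (G₁ G₂ : Graph B) : Prop :=
  G₁.n = G₂.n ∧ (∀ i, i < G₁.n → G₁.label i = G₂.label i) ∧
    ∀ i j, G₁.edge i j → G₂.edge i j

/-- `f` is a topological ordering of `G`: `f` enumerates the vertices so that
    edges always point forward. -/
def IsTopOrder (G : Graph B) (f : Equiv.Perm (Fin G.n)) : Prop :=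
  ∀ i j : Fin G.n, G.edge i.val j.val → f.symm i < f.symm j

/-- `G` has exactly one topological ordering. -/
def Traceable (G : Graph B) : Prop :=
  ∃! f : Equiv.Perm (Fin G.n), G.IsTopOrder f

/-- The identity enumeration is a topological ordering: all edges increase. -/
def TopOrdered (G : Graph B) : Prop := ∀ i j, G.edge i j → i < j

/-- `k` is a union cut of `G`: no edge crosses from below `k` to `k` or above. -/
def UnionCut (G : Graph B) (k : ℕ) : Prop :=
  0 < k ∧ k < G.n ∧ ∀ i j, i < k → k ≤ j → ¬ G.edge i j

/-- `k` is a join cut of `G`: every pair crossing from below `k` to `k` or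
    above (within range) is an edge. -/
def JoinCut (G : Graph B) (k : ℕ) : Prop :=
  0 < k ∧ k < G.n ∧ ∀ i j, i < k → k ≤ j → j < G.n → G.edge i j

/-- Lower part of the index cut at `k`. -/
def cutLo (G : Graph B) (k : ℕ) : Graph B where
  n := k
  label := G.label
  edge := fun i j => G.edge i j ∧ i < k ∧ j < k
  edge_lt := fun i j h => ⟨h.2.1, h.2.2⟩

/-- Upper part of the index cut at `k` (re-indexed from 0). -/
def cutHi (G : Graph B) (k : ℕ) : Graph B where
  n := G.n - k
  label := fun i => G.label (i + k)
  edge := fun i j => G.edge (i + k) (j + k)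
  edge_lt := by
    intro i j h
    have := G.edge_lt _ _ h
    omega

/-- Weak connectedness: any two vertices are joined by an undirected path. -/
def WeaklyConnected (G : Graph B) : Prop :=
  ∀ i j, i < G.n → j < G.n →
    Relation.ReflTransGen (fun a b => G.edge a b ∨ G.edge b a) i j

/-- Union of a nonempty sequence of graph representations. -/
def unionList (G : Graph B) (L : List (Graph B)) : Graph B :=
  L.foldl union G

end Graph

/-! ## Contexts built from bindings with ordered and unordered composition -/

inductive GCtx (B : Type) where
  | empty : GCtx B
  | bind : B → GCtx B
  | comma : GCtx B → GCtx B → GCtx B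
  | par : GCtx B → GCtx B → GCtx B

/-- Context patterns: contexts with a single hole. -/
inductive GPat (B : Type) where
  | hole : GPat B
  | commaL : GPat B → GCtx B → GPat B
  | commaR : GCtx B → GPat B → GPat B
  | parL : GPat B → GCtx B → GPat B
  | parR : GCtx B → GPat B → GPat B

def GPat.fill {B : Type} : GPat B → GCtx B → GCtx B
  | .hole, Γ => Γ
  | .commaL G Δ, Γ => .comma (G.fill Γ) Δ
  | .commaR Δ G, Γ => .comma Δ (G.fill Γ)
  | .parL G Δ, Γ => .par (G.fill Γ) Δ
  | .parR Δ G, Γ => .par Δ (G.fill Γ)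

def GCtx.toList {B : Type} : GCtx B → List B
  | .empty => []
  | .bind b => [b]
  | .comma Γ₁ Γ₂ => Γ₁.toList ++ Γ₂.toList
  | .par Γ₁ Γ₂ => Γ₁.toList ++ Γ₂.toList

/-- Graph part of the interpretation of a context: unrestricted bindings
    contribute no vertex, ordered bindings one vertex; `comma` is join,
    `par` is union. -/
def GCtx.interpG {B : Type} [Inhabited B] (unr : B → Bool) : GCtx B → Graph B
  | .empty => Graph.zero B
  | .bind b =>
      if unr b then Graph.zero B
      else ⟨1, fun _ => b, fun _ _ => False, fun _ _ h => h.elim⟩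
  | .comma Γ₁ Γ₂ => (interpG unr Γ₁).join (interpG unr Γ₂)
  | .par Γ₁ Γ₂ => (interpG unr Γ₁).union (interpG unr Γ₂)

/-- Set part of the interpretation of a context: the set of its
    unrestricted bindings. -/
def GCtx.unrSet {B : Type} (unr : B → Bool) : GCtx B → Set B
  | .empty => ∅
  | .bind b => if unr b then {b} else ∅
  | .comma Γ₁ Γ₂ => unrSet unr Γ₁ ∪ unrSet unr Γ₂
  | .par Γ₁ Γ₂ => unrSet unr Γ₁ ∪ unrSet unr Γ₂

/-! ## Auxiliary material for the uniqueness theorem -/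

namespace Graph

variable {B : Type}

/-- Total number of vertices in a list of graphs. -/
def tot (L : List (Graph B)) : ℕ := (L.map Graph.n).sum

/-- Offset of the `k`-th piece inside the union. -/
def off : List (Graph B) → ℕ → ℕ
  | _, 0 => 0
  | [], _ + 1 => 0
  | A :: As, k + 1 => A.n + off As k

/-- Size of the `k`-th piece. -/
def sz : List (Graph B) → ℕ → ℕ
  | [], _ => 0
  | A :: _, 0 => A.n
  | _ :: As, k + 1 => sz As k

/-- Index of the piece containing a vertex. -/
def idx : List (Graph B) → ℕ → ℕ
  | [], _ => 0
  | A :: As, v => if v < A.n then 0 else idx As (v - A.n) + 1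

theorem ext' {G₁ G₂ : Graph B} (hn : G₁.n = G₂.n) (hl : G₁.label = G₂.label)
    (he : G₁.edge = G₂.edge) : G₁ = G₂ := by
  cases G₁; cases G₂
  simp only [mk.injEq] at *
  exact ⟨hn, hl, he⟩

theorem union_assoc' (G₁ G₂ G₃ : Graph B) :
    (G₁.union G₂).union G₃ = G₁.union (G₂.union G₃) := by
  apply ext'
  · simp only [union]; omega
  · funext i
    simp only [union]
    by_cases h1 : i < G₁.n <;> by_cases h2 : i < G₁.n + G₂.n <;> by_cases h3 : i - G₁.n < G₂.n <;>
      simp only [h1, h2, h3, ↓reduceIte] <;> first | rfl | omega | (congr 1; omega)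
  · funext i j
    simp only [union]
    apply propext
    constructor
    · rintro ((h | ⟨h1, h2, h3⟩) | ⟨h1, h2, h3⟩)
      · exact Or.inl h
      · exact Or.inr ⟨h1, h2, Or.inl h3⟩
      · refine Or.inr ⟨by omega, by omega, Or.inr ⟨by omega, by omega, ?_⟩⟩
        rw [Nat.sub_sub, Nat.sub_sub]; exact h3
    · rintro (h | ⟨h1, h2, (h3 | ⟨h4, h5, h6⟩)⟩)
      · exact Or.inl (Or.inl h)
      · exact Or.inl (Or.inr ⟨h1, h2, h3⟩)
      · refine Or.inr ⟨by omega, by omega, ?_⟩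
        rw [← Nat.sub_sub, ← Nat.sub_sub]; exact h6

theorem foldl_union (A C : Graph B) (l : List (Graph B)) :
    List.foldl union (A.union C) l = A.union (List.foldl union C l) := by
  induction l generalizing C with
  | nil => rfl
  | cons D l ih =>
    simp only [List.foldl_cons]
    rw [union_assoc']
    exact ih (C.union D)

theorem unionList_cons (A C : Graph B) (l : List (Graph B)) :
    unionList A (C :: l) = A.union (unionList C l) := by
  show List.foldl union A (C :: l) = _
  rw [List.foldl_cons]
  exact foldl_union A C l

theorem tot_cons (A : Graph B) (As : List (Graph B)) :
    tot (A :: As) = A.n + tot As := by simp [tot]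

theorem n_unionList (A : Graph B) (As : List (Graph B)) :
    (unionList A As).n = tot (A :: As) := by
  induction As generalizing A with
  | nil => simp [unionList, tot]
  | cons C Cs ih =>
    rw [unionList_cons, tot_cons]
    show A.n + (unionList C Cs).n = _
    rw [ih]

theorem sz_get {L : List (Graph B)} {k : ℕ} (hk : k < L.length) :
    sz L k = (L.get ⟨k, hk⟩).n := by
  induction L generalizing k with
  | nil => simp at hk
  | cons A As ih =>
    cases k with
    | zero => rfl
    | succ k => exact ih (by simpa using hk)

theorem idx_off_add {L : List (Graph B)} {k a : ℕ} (hk : k < L.length)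
    (ha : a < sz L k) :
    idx L (off L k + a) = k ∧ off L k + a < tot L := by
  induction L generalizing k with
  | nil => simp at hk
  | cons A As ih =>
    cases k with
    | zero =>
      simp only [off, idx, sz] at *
      refine ⟨by simp [ha], ?_⟩
      rw [tot_cons]; omega
    | succ k =>
      have hk' : k < As.length := by simpa using hk
      obtain ⟨h1, h2⟩ := ih hk' ha
      constructor
      · simp only [off, idx]
        simp only [show ¬ (A.n + off As k + a < A.n) by omega, if_false]
        have he : A.n + off As k + a - A.n = off As k + a := by omega
        rw [he, h1]
      · rw [tot_cons]
        simp only [off]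
        omega

theorem idx_spec {L : List (Graph B)} {v : ℕ} (hv : v < tot L) :
    idx L v < L.length ∧ off L (idx L v) ≤ v ∧
      v < off L (idx L v) + sz L (idx L v) := by
  induction L generalizing v with
  | nil => simp [tot] at hv
  | cons A As ih =>
    by_cases h : v < A.n
    · simp only [idx, if_pos h, off, sz, List.length_cons]
      omega
    · have hv' : v - A.n < tot As := by rw [tot_cons] at hv; omega
      obtain ⟨h1, h2, h3⟩ := ih hv'
      simp only [idx, if_neg h, off, sz, List.length_cons]
      exact ⟨by omega, by omega, by omega⟩

theorem label_off_add {A : Graph B} {As : List (Graph B)} {k a : ℕ}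
    (hk : k < (A :: As).length) (ha : a < sz (A :: As) k) :
    (unionList A As).label (off (A :: As) k + a)
      = ((A :: As).get ⟨k, hk⟩).label a := by
  induction As generalizing A k with
  | nil =>
    have hk0 : k = 0 := by simpa using hk
    subst hk0
    simp only [off, Nat.zero_add]
    rfl
  | cons C Cs ih =>
    rw [unionList_cons]
    cases k with
    | zero =>
      simp only [off, sz] at ha ⊢
      show (if 0 + a < A.n then A.label (0 + a) else _) = _
      rw [if_pos (by omega)]
      simp
    | succ k =>
      have hk' : k < (C :: Cs).length := by simpa using hk
      have ha' : a < sz (C :: Cs) k := ha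
      simp only [off]
      show (if A.n + off (C :: Cs) k + a < A.n then _
        else (unionList C Cs).label (A.n + off (C :: Cs) k + a - A.n))
          = ((C :: Cs).get ⟨k, hk'⟩).label a
      rw [if_neg (by omega)]
      have he : A.n + off (C :: Cs) k + a - A.n = off (C :: Cs) k + a := by omega
      rw [he]
      exact ih hk' ha'

theorem edge_off_add {A : Graph B} {As : List (Graph B)} {k a b : ℕ}
    (hk : k < (A :: As).length) (ha : a < sz (A :: As) k)
    (hb : b < sz (A :: As) k) :
    (unionList A As).edge (off (A :: As) k + a) (off (A :: As) k + b)
      ↔ ((A :: As).get ⟨k, hk⟩).edge a b := by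
  induction As generalizing A k with
  | nil =>
    have hk0 : k = 0 := by simpa using hk
    subst hk0
    simp only [off]
    show (unionList A []).edge (0 + a) (0 + b) ↔ A.edge a b
    simp [unionList]
  | cons C Cs ih =>
    rw [unionList_cons]
    cases k with
    | zero =>
      simp only [off, sz] at ha hb ⊢
      show A.edge (0 + a) (0 + b) ∨ (A.n ≤ 0 + a ∧ _ ∧ _) ↔ A.edge a b
      constructor
      · rintro (h | ⟨h1, _, _⟩)
        · simpa using h
        · omega
      · intro h; exact Or.inl (by simpa using h)
    | succ k =>
      have hk' : k < (C :: Cs).length := by simpa using hk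
      have ha' : a < sz (C :: Cs) k := ha
      have hb' : b < sz (C :: Cs) k := hb
      simp only [off]
      show A.edge (A.n + off (C :: Cs) k + a) (A.n + off (C :: Cs) k + b) ∨
          (A.n ≤ A.n + off (C :: Cs) k + a ∧ A.n ≤ A.n + off (C :: Cs) k + b ∧
           (unionList C Cs).edge (A.n + off (C :: Cs) k + a - A.n)
             (A.n + off (C :: Cs) k + b - A.n))
          ↔ ((C :: Cs).get ⟨k, hk'⟩).edge a b
      have hea : A.n + off (C :: Cs) k + a - A.n = off (C :: Cs) k + a := by omega
      have heb : A.n + off (C :: Cs) k + b - A.n = off (C :: Cs) k + b := by omega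
      rw [hea, heb]
      constructor
      · rintro (h | ⟨_, _, h⟩)
        · have := A.edge_lt _ _ h; omega
        · exact (ih hk' ha' hb').mp h
      · intro h
        exact Or.inr ⟨by omega, by omega, (ih hk' ha' hb').mpr h⟩

theorem edge_imp_idx {A : Graph B} {As : List (Graph B)} {u w : ℕ}
    (h : (unionList A As).edge u w) :
    idx (A :: As) u = idx (A :: As) w ∧ u < tot (A :: As) ∧ w < tot (A :: As) := by
  have idx_cons : ∀ (A : Graph B) (As : List (Graph B)) (v : ℕ),
      idx (A :: As) v = if v < A.n then 0 else idx As (v - A.n) + 1 :=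
    fun _ _ _ => rfl
  induction As generalizing A u w with
  | nil =>
    have hlt := A.edge_lt u w h
    rw [idx_cons, if_pos hlt.1, idx_cons, if_pos hlt.2, tot_cons]
    exact ⟨rfl, by omega, by omega⟩
  | cons C Cs ih =>
    rw [unionList_cons] at h
    rcases h with h | ⟨h1, h2, h3⟩
    · have := A.edge_lt _ _ h
      rw [idx_cons, if_pos this.1, idx_cons, if_pos this.2, tot_cons]
      exact ⟨rfl, by omega, by omega⟩
    · obtain ⟨e1, e2, e3⟩ := ih h3
      rw [idx_cons A, if_neg (by omega : ¬ u < A.n), idx_cons A,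
        if_neg (by omega : ¬ w < A.n), tot_cons]
      exact ⟨by rw [e1], by omega, by omega⟩

theorem lift_path {A : Graph B} {As : List (Graph B)} {k : ℕ}
    (hk : k < (A :: As).length) {a b : ℕ}
    (h : Relation.ReflTransGen
      (fun x y => ((A :: As).get ⟨k, hk⟩).edge x y ∨ ((A :: As).get ⟨k, hk⟩).edge y x)
      a b) :
    Relation.ReflTransGen
      (fun x y => (unionList A As).edge x y ∨ (unionList A As).edge y x)
      (off (A :: As) k + a) (off (A :: As) k + b) := by
  induction h using Relation.ReflTransGen.head_induction_on with
  | refl => exact Relation.ReflTransGen.refl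
  | @head x c step path ih =>
    have hx : x < sz (A :: As) k ∧ c < sz (A :: As) k := by
      rw [sz_get hk]
      rcases step with e | e
      · have := (((A :: As).get ⟨k, hk⟩)).edge_lt _ _ e; exact ⟨this.1, this.2⟩
      · have := (((A :: As).get ⟨k, hk⟩)).edge_lt _ _ e; exact ⟨this.2, this.1⟩
    refine Relation.ReflTransGen.head ?_ ih
    rcases step with e | e
    · exact Or.inl ((edge_off_add hk hx.1 hx.2).mpr e)
    · exact Or.inr ((edge_off_add hk hx.2 hx.1).mpr e)

theorem rtg_symm {α : Type*} {r : α → α → Prop} (hr : ∀ a b, r a b → r b a)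
    {x y : α} (h : Relation.ReflTransGen r x y) : Relation.ReflTransGen r y x := by
  induction h with
  | refl => exact Relation.ReflTransGen.refl
  | tail _ step ih => exact Relation.ReflTransGen.head (hr _ _ step) ih

theorem wc_iff {A : Graph B} {As : List (Graph B)}
    (hL : ∀ G ∈ A :: As, G.WeaklyConnected ∧ 0 < G.n)
    {u w : ℕ} (hu : u < tot (A :: As)) (hw : w < tot (A :: As)) :
    Relation.ReflTransGen
      (fun x y => (unionList A As).edge x y ∨ (unionList A As).edge y x) u w
      ↔ idx (A :: As) u = idx (A :: As) w := by
  constructor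
  · intro h
    induction h with
    | refl => rfl
    | tail _ step ih =>
      rcases step with e | e
      · have := edge_imp_idx e; omega
      · have := edge_imp_idx e; omega
  · intro h
    have conn : ∀ v, v < tot (A :: As) →
        Relation.ReflTransGen
          (fun x y => (unionList A As).edge x y ∨ (unionList A As).edge y x)
          v (off (A :: As) (idx (A :: As) v)) := by
      intro v hv
      obtain ⟨h1, h2, h3⟩ := idx_spec hv
      obtain ⟨hwc, hpos⟩ := hL _ (List.get_mem _ _)
      have hvlt : v - off (A :: As) (idx (A :: As) v)
          < ((A :: As).get ⟨idx (A :: As) v, h1⟩).n := by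
        rw [← sz_get h1]; omega
      have hp := hwc _ 0 hvlt (by rw [← sz_get h1] at hvlt ⊢; omega)
      have := lift_path h1 hp
      rw [Nat.add_sub_cancel' h2, Nat.add_zero] at this
      exact this
    have hsym : ∀ x y, ((unionList A As).edge x y ∨ (unionList A As).edge y x) →
        ((unionList A As).edge y x ∨ (unionList A As).edge x y) := by
      intro x y h'; tauto
    refine Relation.ReflTransGen.trans (conn u hu) ?_
    rw [h]
    exact rtg_symm hsym (conn w hw)

theorem card_class {n : ℕ} {L : List (Graph B)} (hn : tot L = n) {k : ℕ}
    (hk : k < L.length) :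
    Fintype.card {v : Fin n // idx L v.val = k} = sz L k := by
  have e : {v : Fin n // idx L v.val = k} ≃ Fin (sz L k) :=
    { toFun := fun v => ⟨v.val.val - off L k, by
        have hs := idx_spec (L := L) (v := v.val.val) (by rw [hn]; exact v.val.isLt)
        rw [v.prop] at hs
        omega⟩
      invFun := fun a => ⟨⟨off L k + a.val, by
        have := (idx_off_add hk a.isLt).2; omega⟩,
        (idx_off_add hk a.isLt).1⟩
      left_inv := by
        rintro ⟨⟨v, hv⟩, hvk⟩
        have hs := idx_spec (L := L) (v := v) (by omega)
        rw [hvk] at hs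
        ext
        simp only
        omega
      right_inv := by
        rintro ⟨a, ha⟩
        ext
        simp only
        omega }
  rw [Fintype.card_congr e, Fintype.card_fin]

theorem lift_rtg {n : ℕ} {S₁ S₂ : ℕ → ℕ → Prop}
    (hlt : ∀ i j, S₂ i j → i < n ∧ j < n) (φ : Fin n → Fin n)
    (hstep : ∀ i j : Fin n, S₂ i.val j.val → S₁ (φ i).val (φ j).val)
    {x y : ℕ} (h : Relation.ReflTransGen S₂ x y) :
    ∀ (hx : x < n) (hy : y < n),
      Relation.ReflTransGen S₁ (φ ⟨x, hx⟩).val (φ ⟨y, hy⟩).val := by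
  induction h using Relation.ReflTransGen.head_induction_on with
  | refl => intro hx hy; exact Relation.ReflTransGen.refl
  | @head a c step path ih =>
    intro hx hy
    have hc : c < n := (hlt _ _ step).2
    exact Relation.ReflTransGen.head (hstep ⟨a, hx⟩ ⟨c, hc⟩ step) (ih hc hy)

end Graph

/-- **Uniqueness of union decompositions up to isomorphism.** If two union
decompositions (given as nonempty sequences `A :: As` and `Bh :: Bs` of
weakly connected, nonempty graph representations) have isomorphic unions,
then they have the same length and their components correspond via a
bijection, up to isomorphism. -/
theorem union_decomposition_unique {B : Type}
    (A : Graph B) (As : List (Graph B)) (Bh : Graph B) (Bs : List (Graph B))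
    (hA : ∀ G ∈ A :: As, G.Acyclic ∧ G.WeaklyConnected ∧ 0 < G.n)
    (hB : ∀ G ∈ Bh :: Bs, G.Acyclic ∧ G.WeaklyConnected ∧ 0 < G.n)
    (hiso : (Graph.unionList A As).Iso (Graph.unionList Bh Bs)) :
    As.length = Bs.length ∧
    ∃ g : Fin (As.length + 1) ≃ Fin (Bs.length + 1),
      ∀ i : Fin (As.length + 1),
        ((A :: As).get i).Iso ((Bh :: Bs).get (g i)) := by
  classical
  obtain ⟨hn, f, hfb, hfe, hfl⟩ := hiso
  have hA' : ∀ G ∈ A :: As, G.WeaklyConnected ∧ 0 < G.n :=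
    fun G hG => ⟨(hA G hG).2.1, (hA G hG).2.2⟩
  have hB' : ∀ G ∈ Bh :: Bs, G.WeaklyConnected ∧ 0 < G.n :=
    fun G hG => ⟨(hB G hG).2.1, (hB G hG).2.2⟩
  have htot₁ : Graph.tot (A :: As) = (Graph.unionList A As).n :=
    (Graph.n_unionList A As).symm
  have htot₂ : Graph.tot (Bh :: Bs) = (Graph.unionList A As).n := by
    rw [hn]; exact (Graph.n_unionList Bh Bs).symm
  obtain ⟨e, he⟩ : ∃ e : Fin (Graph.unionList A As).n ≃ Fin (Graph.unionList A As).n,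
      ∀ x, e x = f x := ⟨Equiv.ofBijective f hfb, fun _ => rfl⟩
  have hfe' : ∀ u v : Fin (Graph.unionList A As).n,
      (Graph.unionList A As).edge (e u).val (e v).val ↔
        (Graph.unionList Bh Bs).edge u.val v.val := by
    intro u v; rw [he, he]; exact hfe u v
  have hfl' : ∀ u : Fin (Graph.unionList A As).n,
      (Graph.unionList A As).label (e u).val = (Graph.unionList Bh Bs).label u.val := by
    intro u; rw [he]; exact hfl u
  have hlt₁ : ∀ x y,
      ((Graph.unionList A As).edge x y ∨ (Graph.unionList A As).edge y x) →
      x < (Graph.unionList A As).n ∧ y < (Graph.unionList A As).n := by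
    intro x y h
    rcases h with h | h
    · exact (Graph.unionList A As).edge_lt _ _ h
    · have := (Graph.unionList A As).edge_lt _ _ h; omega
  have hlt₂ : ∀ x y,
      ((Graph.unionList Bh Bs).edge x y ∨ (Graph.unionList Bh Bs).edge y x) →
      x < (Graph.unionList A As).n ∧ y < (Graph.unionList A As).n := by
    intro x y h
    rcases h with h | h
    · have := (Graph.unionList Bh Bs).edge_lt _ _ h; omega
    · have := (Graph.unionList Bh Bs).edge_lt _ _ h; omega
  have W21 : ∀ u w : Fin (Graph.unionList A As).n,
      Relation.ReflTransGen
        (fun x y => (Graph.unionList Bh Bs).edge x y ∨ (Graph.unionList Bh Bs).edge y x)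
        u.val w.val →
      Relation.ReflTransGen
        (fun x y => (Graph.unionList A As).edge x y ∨ (Graph.unionList A As).edge y x)
        (e u).val (e w).val := by
    intro u w h
    have hstep : ∀ x y : Fin (Graph.unionList A As).n,
        ((Graph.unionList Bh Bs).edge x.val y.val ∨
          (Graph.unionList Bh Bs).edge y.val x.val) →
        ((Graph.unionList A As).edge ((fun z => e z) x).val ((fun z => e z) y).val ∨
          (Graph.unionList A As).edge ((fun z => e z) y).val ((fun z => e z) x).val) := by
      intro x y hxy
      rcases hxy with h' | h'
      · exact Or.inl ((hfe' x y).mpr h')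
      · exact Or.inr ((hfe' y x).mpr h')
    exact Graph.lift_rtg hlt₂ (fun z => e z) hstep h u.isLt w.isLt
  have W12 : ∀ u w : Fin (Graph.unionList A As).n,
      Relation.ReflTransGen
        (fun x y => (Graph.unionList A As).edge x y ∨ (Graph.unionList A As).edge y x)
        u.val w.val →
      Relation.ReflTransGen
        (fun x y => (Graph.unionList Bh Bs).edge x y ∨ (Graph.unionList Bh Bs).edge y x)
        (e.symm u).val (e.symm w).val := by
    intro u w h
    have hstep : ∀ x y : Fin (Graph.unionList A As).n,
        ((Graph.unionList A As).edge x.val y.val ∨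
          (Graph.unionList A As).edge y.val x.val) →
        ((Graph.unionList Bh Bs).edge ((fun z => e.symm z) x).val
            ((fun z => e.symm z) y).val ∨
          (Graph.unionList Bh Bs).edge ((fun z => e.symm z) y).val
            ((fun z => e.symm z) x).val) := by
      intro x y hxy
      rcases hxy with h' | h'
      · refine Or.inl ((hfe' (e.symm x) (e.symm y)).mp ?_)
        rw [e.apply_symm_apply, e.apply_symm_apply]; exact h'
      · refine Or.inr ((hfe' (e.symm y) (e.symm x)).mp ?_)
        rw [e.apply_symm_apply, e.apply_symm_apply]; exact h'
    exact Graph.lift_rtg hlt₁ (fun z => e.symm z) hstep h u.isLt w.isLt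
  have hI : ∀ u w : Fin (Graph.unionList A As).n,
      Graph.idx (Bh :: Bs) u.val = Graph.idx (Bh :: Bs) w.val ↔
        Graph.idx (A :: As) (e u).val = Graph.idx (A :: As) (e w).val := by
    intro u w
    rw [← Graph.wc_iff hB' (by omega : u.val < Graph.tot (Bh :: Bs))
        (by omega : w.val < Graph.tot (Bh :: Bs)),
      ← Graph.wc_iff hA' (by omega : (e u).val < Graph.tot (A :: As))
        (by omega : (e w).val < Graph.tot (A :: As))]
    constructor
    · exact W21 u w
    · intro h
      have := W12 (e u) (e w) h
      rwa [e.symm_apply_apply, e.symm_apply_apply] at this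
  have hszA : ∀ k, k < As.length + 1 → 0 < Graph.sz (A :: As) k := by
    intro k hk
    rw [Graph.sz_get (show k < (A :: As).length from hk)]
    exact (hA _ (List.get_mem _ _)).2.2
  have hszB : ∀ k, k < Bs.length + 1 → 0 < Graph.sz (Bh :: Bs) k := by
    intro k hk
    rw [Graph.sz_get (show k < (Bh :: Bs).length from hk)]
    exact (hB _ (List.get_mem _ _)).2.2
  have hrep₁ : ∀ k, k < As.length + 1 →
      Graph.off (A :: As) k < (Graph.unionList A As).n ∧
      Graph.idx (A :: As) (Graph.off (A :: As) k) = k := by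
    intro k hk
    have h := Graph.idx_off_add (L := A :: As) (k := k) (a := 0) hk (hszA k hk)
    rw [Nat.add_zero] at h
    exact ⟨by omega, h.1⟩
  have hrep₂ : ∀ k, k < Bs.length + 1 →
      Graph.off (Bh :: Bs) k < (Graph.unionList A As).n ∧
      Graph.idx (Bh :: Bs) (Graph.off (Bh :: Bs) k) = k := by
    intro k hk
    have h := Graph.idx_off_add (L := Bh :: Bs) (k := k) (a := 0) hk (hszB k hk)
    rw [Nat.add_zero] at h
    exact ⟨by omega, h.1⟩
  have hidxlt₁ : ∀ v : Fin (Graph.unionList A As).n,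
      Graph.idx (A :: As) v.val < As.length + 1 := by
    intro v
    exact (Graph.idx_spec (L := A :: As) (v := v.val) (by omega)).1
  have hidxlt₂ : ∀ v : Fin (Graph.unionList A As).n,
      Graph.idx (Bh :: Bs) v.val < Bs.length + 1 := by
    intro v
    exact (Graph.idx_spec (L := Bh :: Bs) (v := v.val) (by omega)).1
  have hkey : ∀ (v r : Fin (Graph.unionList A As).n) (k : ℕ),
      Graph.idx (A :: As) r.val = k →
      (Graph.idx (A :: As) (e v).val = k ↔
        Graph.idx (Bh :: Bs) v.val = Graph.idx (Bh :: Bs) (e.symm r).val) := by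
    intro v r k hr
    have h := hI v (e.symm r)
    rw [e.apply_symm_apply] at h
    rw [← hr]
    exact h.symm
  have hkey' : ∀ (w r : Fin (Graph.unionList A As).n) (m : ℕ),
      Graph.idx (Bh :: Bs) r.val = m →
      (Graph.idx (Bh :: Bs) (e.symm w).val = m ↔
        Graph.idx (A :: As) w.val = Graph.idx (A :: As) (e r).val) := by
    intro w r m hr
    have h := hI (e.symm w) r
    rw [e.apply_symm_apply] at h
    rw [← hr]
    exact h
  let g : Fin (As.length + 1) → Fin (Bs.length + 1) := fun k =>
    ⟨Graph.idx (Bh :: Bs)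
        (e.symm ⟨Graph.off (A :: As) k.val, (hrep₁ k.val k.isLt).1⟩).val,
      hidxlt₂ _⟩
  let g' : Fin (Bs.length + 1) → Fin (As.length + 1) := fun k =>
    ⟨Graph.idx (A :: As)
        (e ⟨Graph.off (Bh :: Bs) k.val, (hrep₂ k.val k.isLt).1⟩).val,
      hidxlt₁ _⟩
  have hg'g : ∀ k : Fin (As.length + 1), g' (g k) = k := by
    intro k
    apply Fin.ext
    show Graph.idx (A :: As)
        (e ⟨Graph.off (Bh :: Bs) (g k).val, (hrep₂ (g k).val (g k).isLt).1⟩).val = k.val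
    refine (hkey ⟨Graph.off (Bh :: Bs) (g k).val, (hrep₂ (g k).val (g k).isLt).1⟩
        ⟨Graph.off (A :: As) k.val, (hrep₁ k.val k.isLt).1⟩ k.val
        (hrep₁ k.val k.isLt).2).mpr ?_
    exact (hrep₂ (g k).val (g k).isLt).2
  have hgg' : ∀ k : Fin (Bs.length + 1), g (g' k) = k := by
    intro k
    apply Fin.ext
    show Graph.idx (Bh :: Bs)
        (e.symm ⟨Graph.off (A :: As) (g' k).val, (hrep₁ (g' k).val (g' k).isLt).1⟩).val
          = k.val
    refine (hkey' ⟨Graph.off (A :: As) (g' k).val, (hrep₁ (g' k).val (g' k).isLt).1⟩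
        ⟨Graph.off (Bh :: Bs) k.val, (hrep₂ k.val k.isLt).1⟩ k.val
        (hrep₂ k.val k.isLt).2).mpr ?_
    exact (hrep₁ (g' k).val (g' k).isLt).2
  have hlen : As.length = Bs.length := by
    have hc := Fintype.card_congr
      (⟨g, g', hg'g, hgg'⟩ : Fin (As.length + 1) ≃ Fin (Bs.length + 1))
    simp only [Fintype.card_fin] at hc
    omega
  refine ⟨hlen, ⟨g, g', hg'g, hgg'⟩, ?_⟩
  intro i
  show ((A :: As).get i).Iso ((Bh :: Bs).get (g i))
  have hkA : i.val < (A :: As).length := i.isLt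
  have hmB : (g i).val < (Bh :: Bs).length := (g i).isLt
  have hPsz : Graph.sz (A :: As) i.val = ((A :: As).get i).n := Graph.sz_get hkA
  have hQsz : Graph.sz (Bh :: Bs) (g i).val = ((Bh :: Bs).get (g i)).n :=
    Graph.sz_get hmB
  have hcm : ∀ v : Fin (Graph.unionList A As).n,
      Graph.idx (A :: As) (e v).val = i.val ↔
        Graph.idx (Bh :: Bs) v.val = (g i).val :=
    fun v => hkey v ⟨Graph.off (A :: As) i.val, (hrep₁ i.val i.isLt).1⟩ i.val
      (hrep₁ i.val i.isLt).2
  have hcard : Graph.sz (A :: As) i.val = Graph.sz (Bh :: Bs) (g i).val := by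
    rw [← Graph.card_class htot₁ hkA, ← Graph.card_class htot₂ hmB]
    refine Fintype.card_congr (Equiv.subtypeEquiv e.symm ?_)
    intro v
    rw [← hcm (e.symm v), e.apply_symm_apply]
  have hPQ : ((A :: As).get i).n = ((Bh :: Bs).get (g i)).n := by
    rw [← hPsz, ← hQsz, hcard]
  have hjlt : ∀ j : Fin ((A :: As).get i).n, j.val < Graph.sz (Bh :: Bs) (g i).val := by
    intro j; have := j.isLt; omega
  have hjlt₁ : ∀ j : Fin ((A :: As).get i).n, j.val < Graph.sz (A :: As) i.val := by
    intro j; have := j.isLt; omega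
  have hVlt : ∀ j : Fin ((A :: As).get i).n,
      Graph.off (Bh :: Bs) (g i).val + j.val < (Graph.unionList A As).n := by
    intro j
    have := (Graph.idx_off_add hmB (hjlt j)).2
    omega
  have hVidx : ∀ j : Fin ((A :: As).get i).n,
      Graph.idx (Bh :: Bs) (Graph.off (Bh :: Bs) (g i).val + j.val) = (g i).val :=
    fun j => (Graph.idx_off_add hmB (hjlt j)).1
  let V : Fin ((A :: As).get i).n → Fin (Graph.unionList A As).n :=
    fun j => ⟨Graph.off (Bh :: Bs) (g i).val + j.val, hVlt j⟩
  have hVval : ∀ j, (V j).val = Graph.off (Bh :: Bs) (g i).val + j.val := fun _ => rfl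
  have heidx : ∀ j, Graph.idx (A :: As) (e (V j)).val = i.val :=
    fun j => (hcm (V j)).mpr (hVidx j)
  have hespec : ∀ j, Graph.off (A :: As) i.val ≤ (e (V j)).val ∧
      (e (V j)).val < Graph.off (A :: As) i.val + Graph.sz (A :: As) i.val := by
    intro j
    have hs := Graph.idx_spec (L := A :: As) (v := (e (V j)).val)
      (by rw [htot₁]; exact (e (V j)).isLt)
    rw [heidx j] at hs
    exact ⟨hs.2.1, hs.2.2⟩
  let φ : Fin ((A :: As).get i).n → Fin ((A :: As).get i).n := fun j =>
    ⟨(e (V j)).val - Graph.off (A :: As) i.val, by have := hespec j; omega⟩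
  have hφval : ∀ j, (φ j).val = (e (V j)).val - Graph.off (A :: As) i.val := fun _ => rfl
  have hφlt : ∀ j, (φ j).val < Graph.sz (A :: As) i.val := by
    intro j; rw [hφval]; have := hespec j; omega
  have hoff : ∀ j, Graph.off (A :: As) i.val + (φ j).val = (e (V j)).val := by
    intro j; rw [hφval]; have := hespec j; omega
  have hφinj : Function.Injective φ := by
    intro j₁ j₂ hj
    have h1 : (φ j₁).val = (φ j₂).val := congrArg Fin.val hj
    rw [hφval, hφval] at h1
    have h2 : (e (V j₁)).val = (e (V j₂)).val := by
      have := hespec j₁; have := hespec j₂; omega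
    have h3 : V j₁ = V j₂ := e.injective (Fin.ext h2)
    have h4 := congrArg Fin.val h3
    rw [hVval, hVval] at h4
    exact Fin.ext (by omega)
  have hφsurj : Function.Surjective φ := by
    intro j'
    have hult : Graph.off (A :: As) i.val + j'.val < (Graph.unionList A As).n := by
      have := (Graph.idx_off_add hkA (hjlt₁ j')).2; omega
    have huidx : Graph.idx (A :: As) (Graph.off (A :: As) i.val + j'.val) = i.val :=
      (Graph.idx_off_add hkA (hjlt₁ j')).1
    have hvidx : Graph.idx (Bh :: Bs)
        (e.symm ⟨Graph.off (A :: As) i.val + j'.val, hult⟩).val = (g i).val := by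
      rw [← hcm (e.symm ⟨Graph.off (A :: As) i.val + j'.val, hult⟩),
        e.apply_symm_apply]
      exact huidx
    have hs := Graph.idx_spec (L := Bh :: Bs)
      (v := (e.symm ⟨Graph.off (A :: As) i.val + j'.val, hult⟩).val)
      (by rw [htot₂]; exact (e.symm ⟨Graph.off (A :: As) i.val + j'.val, hult⟩).isLt)
    rw [hvidx] at hs
    refine ⟨⟨(e.symm ⟨Graph.off (A :: As) i.val + j'.val, hult⟩).val
        - Graph.off (Bh :: Bs) (g i).val, by omega⟩, ?_⟩
    have hVjj : V ⟨(e.symm ⟨Graph.off (A :: As) i.val + j'.val, hult⟩).val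
        - Graph.off (Bh :: Bs) (g i).val, by omega⟩
          = e.symm ⟨Graph.off (A :: As) i.val + j'.val, hult⟩ := by
      apply Fin.ext
      rw [hVval]
      show Graph.off (Bh :: Bs) (g i).val +
        ((e.symm ⟨Graph.off (A :: As) i.val + j'.val, hult⟩).val
          - Graph.off (Bh :: Bs) (g i).val) = _
      omega
    apply Fin.ext
    rw [hφval, hVjj, e.apply_symm_apply]
    show Graph.off (A :: As) i.val + j'.val - Graph.off (A :: As) i.val = j'.val
    omega
  have hedge : ∀ j₁ j₂ : Fin ((A :: As).get i).n,
      ((A :: As).get i).edge (φ j₁).val (φ j₂).val ↔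
        ((Bh :: Bs).get (g i)).edge j₁.val j₂.val := by
    intro j₁ j₂
    have hp := Graph.edge_off_add (A := A) (As := As) hkA (hφlt j₁) (hφlt j₂)
    rw [hoff j₁, hoff j₂] at hp
    have hq := Graph.edge_off_add (A := Bh) (As := Bs) hmB (hjlt j₁) (hjlt j₂)
    exact (hp.symm.trans (hfe' (V j₁) (V j₂))).trans hq
  have hlab : ∀ j : Fin ((A :: As).get i).n,
      ((A :: As).get i).label (φ j).val = ((Bh :: Bs).get (g i)).label j.val := by
    intro j
    have hp := Graph.label_off_add (A := A) (As := As) hkA (hφlt j)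
    rw [hoff j] at hp
    have hq := Graph.label_off_add (A := Bh) (As := Bs) hmB (hjlt j)
    exact hp.symm.trans ((hfl' (V j)).trans hq)
  exact ⟨hPQ, φ, ⟨hφinj, hφsurj⟩, hedge, hlab⟩

end LawOrder
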